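/- arXiv:2508.15675 — 2 statements merged into one kernel-verified Lean document; each statement's English description precedes it below -/
import Mathlib

section
/- Let A ∈ ℝ^{r×r} with ‖A‖_op ≤ 1 − c for some c ∈ (0,1), and let matrices R_t ∈ ℝ^{r×r} satisfy R_0 = 0 and R_t = D_t + A R_{t−1} Aᵀ for t = 1,…,T. Setting S_T = Σ_{t=1}^T R_t and W_k = Σ_{t=1}^k D_t, one has the identity S_T = Σ_{k=1}^T A^{T−k} W_k (Aᵀ)^{T−k}, and consequently ‖S_T‖_op ≤ (1 − ‖A‖_op²)^{−1} max_{k∈[T]} ‖W_k‖_op. -/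
open Matrix

/-- The ℓ₂ → ℓ₂ operator (spectral) norm of a real matrix. -/
noncomputable def opNorm {m n : Type*} [Fintype m] [Fintype n] [DecidableEq n]
    (A : Matrix m n ℝ) : ℝ :=
  ‖LinearMap.toContinuousLinearMap (Matrix.toEuclideanLin A)‖

open scoped Matrix.Norms.L2Operator

lemma opNorm_eq {n : Type*} [Fintype n] [DecidableEq n] (A : Matrix n n ℝ) :
    opNorm A = ‖A‖ := rfl

lemma transpose_norm {r : ℕ} (B : Matrix (Fin r) (Fin r) ℝ) : ‖Bᵀ‖ = ‖B‖ := by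
  have h : Bᴴ = Bᵀ := by ext i j; simp [Matrix.conjTranspose_apply]
  rw [← h, Matrix.l2_opNorm_conjTranspose]

lemma key_identity {r : ℕ} (A : Matrix (Fin r) (Fin r) ℝ)
    (D R : ℕ → Matrix (Fin r) (Fin r) ℝ) (hR0 : R 0 = 0) (T : ℕ)
    (hrec : ∀ t, 1 ≤ t → t ≤ T → R t = D t + A * R (t - 1) * Aᵀ) :
    ∀ n, n ≤ T → (∑ t ∈ Finset.Icc 1 n, R t) =
      ∑ k ∈ Finset.Icc 1 n, A ^ (n - k) * (∑ s ∈ Finset.Icc 1 k, D s) * (Aᵀ) ^ (n - k) := by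
  intro n
  induction n with
  | zero => simp
  | succ n ih =>
    intro h
    have hih := ih (Nat.le_of_succ_le h)
    -- step identity for the LHS
    have hstep : (∑ t ∈ Finset.Icc 1 (n+1), R t)
        = (∑ t ∈ Finset.Icc 1 (n+1), D t) + A * (∑ t ∈ Finset.Icc 1 n, R t) * Aᵀ := by
      have h1 : ∀ t ∈ Finset.Icc 1 (n+1), R t = D t + A * R (t-1) * Aᵀ := by
        intro t ht
        rw [Finset.mem_Icc] at ht
        exact hrec t ht.1 (le_trans ht.2 h)
      rw [Finset.sum_congr rfl h1, Finset.sum_add_distrib]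
      congr 1
      have e1 : Finset.Icc 1 (n+1) = Finset.Ico 1 (n+2) := by
        exact (Finset.Ico_add_one_right_eq_Icc 1 (n+1)).symm
      have e2 : Finset.Icc 1 n = Finset.Ico 1 (n+1) := by
        rw [Finset.Ico_add_one_right_eq_Icc]
      rw [e1, e2, Finset.sum_Ico_eq_sum_range, Finset.sum_Ico_eq_sum_range]
      simp only [Nat.add_sub_cancel, Nat.succ_sub_one]
      have : ∀ i, 1 + i - 1 = i := by omega
      simp only [this]
      rw [Finset.sum_range_succ' (fun i => A * R i * Aᵀ) n, hR0]
      simp only [Matrix.mul_zero, Matrix.zero_mul, add_zero]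
      rw [Finset.mul_sum, Finset.sum_mul]
      simp [add_comm]
    -- step identity for the RHS
    have hG : (∑ k ∈ Finset.Icc 1 (n+1),
          A ^ (n+1-k) * (∑ s ∈ Finset.Icc 1 k, D s) * (Aᵀ) ^ (n+1-k))
        = (∑ s ∈ Finset.Icc 1 (n+1), D s)
          + A * (∑ k ∈ Finset.Icc 1 n,
              A ^ (n-k) * (∑ s ∈ Finset.Icc 1 k, D s) * (Aᵀ) ^ (n-k)) * Aᵀ := by
      rw [Finset.sum_Icc_succ_top (by omega : 1 ≤ n+1)]
      simp only [Nat.sub_self, pow_zero, one_mul, mul_one]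
      rw [add_comm]
      congr 1
      rw [Finset.mul_sum, Finset.sum_mul]
      apply Finset.sum_congr rfl
      intro k hk
      rw [Finset.mem_Icc] at hk
      have hk' : n + 1 - k = (n - k) + 1 := by omega
      rw [hk', pow_succ' A, pow_succ Aᵀ]
      simp [mul_assoc]
    rw [hstep, hG, hih]

/-- if `‖A‖_op ≤ 1 − c`, `R_0 = 0` and `R_t = D_t + A R_{t−1} Aᵀ` for
`t = 1,…,T`, then `S_T := ∑_{t=1}^T R_t = ∑_{k=1}^T A^{T−k} W_k (Aᵀ)^{T−k}` with
`W_k := ∑_{t=1}^k D_t`, and `‖S_T‖_op ≤ (1 − ‖A‖_op²)⁻¹ max_{k ∈ [T]} ‖W_k‖_op`. -/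
theorem telescoping_recursion_bound
    (r T : ℕ) (hT : 1 ≤ T) (c : ℝ) (hc0 : 0 < c) (hc1 : c < 1)
    (A : Matrix (Fin r) (Fin r) ℝ) (hA : opNorm A ≤ 1 - c)
    (D R : ℕ → Matrix (Fin r) (Fin r) ℝ)
    (hR0 : R 0 = 0)
    (hrec : ∀ t, 1 ≤ t → t ≤ T → R t = D t + A * R (t - 1) * Aᵀ) :
    (∑ t ∈ Finset.Icc 1 T, R t) =
        ∑ k ∈ Finset.Icc 1 T, A ^ (T - k) * (∑ s ∈ Finset.Icc 1 k, D s) * (Aᵀ) ^ (T - k) ∧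
      opNorm (∑ t ∈ Finset.Icc 1 T, R t) ≤
        (1 - (opNorm A) ^ 2)⁻¹ *
          (Finset.Icc 1 T).sup' (Finset.nonempty_Icc.mpr hT)
            (fun k => opNorm (∑ s ∈ Finset.Icc 1 k, D s)) := by
  have hid := key_identity A D R hR0 T hrec T le_rfl
  refine ⟨hid, ?_⟩
  rw [hid]
  simp only [opNorm_eq] at *
  set a : ℝ := ‖A‖ with ha
  have ha0 : 0 ≤ a := norm_nonneg _
  have ha1 : a < 1 := lt_of_le_of_lt hA (by linarith)
  have ha2 : a ^ 2 < 1 := by nlinarith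
  have ha2' : 0 ≤ a ^ 2 := by positivity
  set W : ℕ → Matrix (Fin r) (Fin r) ℝ := fun k => ∑ s ∈ Finset.Icc 1 k, D s with hW
  set M : ℝ := (Finset.Icc 1 T).sup' (Finset.nonempty_Icc.mpr hT) (fun k => ‖W k‖) with hM
  have hM0 : 0 ≤ M := le_trans (norm_nonneg (W 1))
    (Finset.le_sup' (f := fun k => ‖W k‖) (Finset.mem_Icc.mpr ⟨le_rfl, hT⟩))
  have hterm : ∀ k ∈ Finset.Icc 1 T,
      ‖A ^ (T - k) * W k * (Aᵀ) ^ (T - k)‖ ≤ (a ^ 2) ^ (T - k) * M := by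
    intro k hk
    have hWk : ‖W k‖ ≤ M := Finset.le_sup' (f := fun k => ‖W k‖) hk
    have hpow : ∀ m : ℕ, ‖A ^ m * W k * (Aᵀ) ^ m‖ ≤ (a ^ 2) ^ m * ‖W k‖ := by
      intro m
      cases m with
      | zero => simp
      | succ j =>
        have h1 : ‖A ^ (j+1)‖ ≤ a ^ (j+1) := norm_pow_le' A (Nat.succ_pos j)
        have h2 : ‖(Aᵀ) ^ (j+1)‖ ≤ a ^ (j+1) := by
          rw [← Matrix.transpose_pow, transpose_norm]
          exact norm_pow_le' A (Nat.succ_pos j)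
        calc ‖A ^ (j+1) * W k * (Aᵀ) ^ (j+1)‖
            ≤ ‖A ^ (j+1) * W k‖ * ‖(Aᵀ) ^ (j+1)‖ := norm_mul_le _ _
          _ ≤ ‖A ^ (j+1)‖ * ‖W k‖ * ‖(Aᵀ) ^ (j+1)‖ := by
              exact mul_le_mul_of_nonneg_right (norm_mul_le _ _) (norm_nonneg _)
          _ ≤ a ^ (j+1) * ‖W k‖ * a ^ (j+1) := by
              apply mul_le_mul
              · exact mul_le_mul_of_nonneg_right h1 (norm_nonneg _)
              · exact h2
              · exact norm_nonneg _
              · positivity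
          _ = (a ^ 2) ^ (j+1) * ‖W k‖ := by ring
    calc ‖A ^ (T - k) * W k * (Aᵀ) ^ (T - k)‖ ≤ (a ^ 2) ^ (T - k) * ‖W k‖ := hpow _
      _ ≤ (a ^ 2) ^ (T - k) * M := by
          exact mul_le_mul_of_nonneg_left hWk (by positivity)
  have hgeom : (∑ k ∈ Finset.Icc 1 T, (a ^ 2) ^ (T - k)) ≤ (1 - a ^ 2)⁻¹ := by
    have e1 : Finset.Icc 1 T = Finset.Ico 1 (T+1) := by rw [Finset.Ico_add_one_right_eq_Icc]
    rw [e1, Finset.sum_Ico_eq_sum_range]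
    simp only [Nat.add_sub_cancel]
    have : ∀ i, T - (1 + i) = T - 1 - i := by omega
    simp only [this]
    have hT' : T - 1 + 1 = T := by omega
    have hrefl := Finset.sum_range_reflect (fun j => (a ^ 2) ^ j) T
    have : ∀ i, T - 1 - i = T - 1 - i := fun _ => rfl
    rw [show (fun i => (a ^ 2) ^ (T - 1 - i)) = (fun i => (a ^ 2) ^ (T - 1 - i)) from rfl]
    calc ∑ i ∈ Finset.range T, (a ^ 2) ^ (T - 1 - i)
        = ∑ i ∈ Finset.range T, (a ^ 2) ^ i := hrefl
      _ ≤ (1 - a ^ 2)⁻¹ := by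
          rw [geom_sum_eq (ne_of_lt ha2)]
          have h1 : 0 < 1 - a ^ 2 := by linarith
          have h2 : 0 ≤ (a ^ 2) ^ T := by positivity
          rw [show ((a ^ 2) ^ T - 1) / (a ^ 2 - 1) = (1 - (a ^ 2) ^ T) / (1 - a ^ 2) by
            rw [← neg_div_neg_eq]; ring_nf]
          rw [div_le_iff₀ h1, inv_mul_cancel₀ (ne_of_gt h1)]
          linarith
  calc ‖∑ k ∈ Finset.Icc 1 T, A ^ (T - k) * W k * (Aᵀ) ^ (T - k)‖
      ≤ ∑ k ∈ Finset.Icc 1 T, ‖A ^ (T - k) * W k * (Aᵀ) ^ (T - k)‖ := norm_sum_le _ _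
    _ ≤ ∑ k ∈ Finset.Icc 1 T, (a ^ 2) ^ (T - k) * M := Finset.sum_le_sum hterm
    _ = (∑ k ∈ Finset.Icc 1 T, (a ^ 2) ^ (T - k)) * M := by rw [Finset.sum_mul]
    _ ≤ (1 - a ^ 2)⁻¹ * M := mul_le_mul_of_nonneg_right hgeom hM0
end

section
/- Let g_1,…,g_r : [0,1] → ℝ satisfy ∫₀¹ g_k g_l = δ_{kl}, each g_k ∈ C¹([0,1]), and max_k (‖g_k‖_∞ ∨ ‖g_k′‖_∞) ≤ C_g. Define F ∈ ℝ^{T×r} by F_{t,k} = g_k(t/T), and let Q ∈ ℝ^{T×T} with Q_{ts} = 1 if 1 ≤ |t−s| ≤ B and 0 otherwise, for a bandwidth 1 ≤ B ≤ T. Then there exists an absolute constant C > 0 such that ‖Fᵀ Q F − 2BT I_r‖_op ≤ C C_g² B² r. -/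
open Matrix

/-- The `T × r` grid-evaluation matrix `F_{t,k} = g_k(t/T)` (with `t = 1,…,T`). -/
noncomputable def gridMat (r T : ℕ) (g : Fin r → ℝ → ℝ) : Matrix (Fin T) (Fin r) ℝ :=
  Matrix.of fun t k => g k (((t.val : ℝ) + 1) / (T : ℝ))

/-- The 0/1 band matrix of bandwidth `B`: `Q_{ts} = 1` if `1 ≤ |t−s| ≤ B`, else `0`. -/
noncomputable def bandQ (T B : ℕ) : Matrix (Fin T) (Fin T) ℝ :=
  Matrix.of fun t s =>
    if 1 ≤ |(t.val : ℤ) - (s.val : ℤ)| ∧ |(t.val : ℤ) - (s.val : ℤ)| ≤ (B : ℤ)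
    then (1 : ℝ) else 0


lemma lip_of_deriv {g : ℝ → ℝ} {Cg : ℝ} (hg : ContDiffOn ℝ 1 g (Set.Icc 0 1))
    (hb : ∀ u ∈ Set.Icc (0:ℝ) 1, |deriv g u| ≤ Cg) :
    ∀ x ∈ Set.Icc (0:ℝ) 1, ∀ y ∈ Set.Icc (0:ℝ) 1, |g y - g x| ≤ Cg * |y - x| := by
  set s : Set ℝ := Set.Icc 0 1 with hs
  have hdiff : DifferentiableOn ℝ g s := hg.differentiableOn one_ne_zero
  have hud : UniqueDiffOn ℝ s := uniqueDiffOn_Icc one_pos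
  have hcont : ContinuousOn (derivWithin g s) s := hg.continuousOn_derivWithin hud le_rfl
  have hIoo : ∀ u ∈ Set.Ioo (0:ℝ) 1, |derivWithin g s u| ≤ Cg := by
    intro u hu
    rw [derivWithin_of_mem_nhds (Icc_mem_nhds hu.1 hu.2)]
    exact hb u (Set.Ioo_subset_Icc_self hu)
  have hbd : ∀ u ∈ s, |derivWithin g s u| ≤ Cg := by
    intro u hu
    have hcl : u ∈ closure (Set.Ioo (0:ℝ) 1) := by
      rwa [closure_Ioo (by norm_num : (0:ℝ) ≠ 1)]
    have hne : (nhdsWithin u (Set.Ioo (0:ℝ) 1)).NeBot :=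
      mem_closure_iff_nhdsWithin_neBot.mp hcl
    have ht : Filter.Tendsto (fun v => |derivWithin g s v|) (nhdsWithin u (Set.Ioo (0:ℝ) 1))
        (nhds (|derivWithin g s u|)) := by
      exact (continuous_abs.continuousAt.tendsto.comp
        (((hcont u hu).mono Set.Ioo_subset_Icc_self).tendsto))
    exact le_of_tendsto ht (Filter.eventually_of_mem self_mem_nhdsWithin hIoo)
  intro x hx y hy
  have := Convex.norm_image_sub_le_of_norm_derivWithin_le hdiff
    (fun u hu => (by simpa using hbd u hu)) (convex_Icc 0 1) hx hy
  simpa [Real.norm_eq_abs] using this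


lemma riemann_bound {f : ℝ → ℝ} {L : ℝ} (T : ℕ) (hT : 1 ≤ T)
    (hc : ContinuousOn f (Set.Icc 0 1))
    (hlip : ∀ x ∈ Set.Icc (0:ℝ) 1, ∀ y ∈ Set.Icc (0:ℝ) 1, |f y - f x| ≤ L * |y - x|) :
    |(∑ i ∈ Finset.range T, f (((i:ℝ)+1)/T)) - T * ∫ u in (0:ℝ)..1, f u| ≤ L := by
  have hT0 : (0:ℝ) < T := by exact_mod_cast hT
  set a : ℕ → ℝ := fun i => (i:ℝ)/T with ha
  have hm : ∀ i : ℕ, i ≤ T → a i ∈ Set.Icc (0:ℝ) 1 := by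
    intro i hi
    constructor
    · positivity
    · rw [div_le_one hT0]; exact_mod_cast hi
  have hmono : ∀ i : ℕ, a i ≤ a (i+1) := by
    intro i
    show (i:ℝ)/T ≤ ((i+1:ℕ):ℝ)/T
    push_cast
    gcongr
    linarith
  have hsub : ∀ i : ℕ, i < T → Set.uIcc (a i) (a (i+1)) ⊆ Set.Icc 0 1 := by
    intro i hi
    rw [Set.uIcc_of_le (hmono i)]
    exact Set.Icc_subset_Icc (hm i hi.le).1 (hm (i+1) hi).2
  have hint : ∀ i : ℕ, i < T → IntervalIntegrable f MeasureTheory.volume (a i) (a (i+1)) :=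
    fun i hi => (hc.mono (hsub i hi)).intervalIntegrable
  have hsplit : ∑ i ∈ Finset.range T, ∫ u in (a i)..(a (i+1)), f u = ∫ u in (0:ℝ)..1, f u := by
    rw [intervalIntegral.sum_integral_adjacent_intervals hint]
    norm_num [ha, div_self (ne_of_gt hT0)]
  have hL : 0 ≤ L := by
    have h1 := hlip 0 (by norm_num) 1 (by norm_num)
    have h0 := abs_nonneg (f 1 - f 0)
    norm_num at h1
    linarith
  have key : ∀ i : ℕ, i < T →
      |f (((i:ℝ)+1)/T) - T * ∫ u in (a i)..(a (i+1)), f u| ≤ L / T := by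
    intro i hi
    have hlen : a (i+1) - a i = 1/T := by
      show ((i+1:ℕ):ℝ)/T - (i:ℝ)/T = 1/T
      push_cast; field_simp; ring
    have hc1 : ((i:ℝ)+1)/T ∈ Set.Icc (0:ℝ) 1 := by
      have h := hm (i+1) hi
      have e2 : a (i+1) = ((i:ℝ)+1)/T := by show ((i+1:ℕ):ℝ)/T = _; push_cast; ring
      rwa [e2] at h
    have heq : f (((i:ℝ)+1)/T) - T * ∫ u in (a i)..(a (i+1)), f u
        = T * ∫ u in (a i)..(a (i+1)), (f (((i:ℝ)+1)/T) - f u) := by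
      rw [intervalIntegral.integral_sub intervalIntegrable_const (hint i hi),
        intervalIntegral.integral_const, hlen, smul_eq_mul]
      field_simp
    rw [heq, abs_mul, abs_of_nonneg hT0.le]
    have hbd : |∫ u in (a i)..(a (i+1)), (f (((i:ℝ)+1)/T) - f u)| ≤ (L/T) * |a (i+1) - a i| := by
      rw [← Real.norm_eq_abs]
      apply intervalIntegral.norm_integral_le_of_norm_le_const
      intro u hu
      rw [Set.uIoc_of_le (hmono i)] at hu
      have hu' : u ∈ Set.Icc (0:ℝ) 1 := (hsub i hi) (by
        rw [Set.uIcc_of_le (hmono i)]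
        exact Set.Ioc_subset_Icc_self hu)
      have hud : |(((i:ℝ)+1)/T) - u| ≤ 1/T := by
        have h1 : a i < u := hu.1
        have h2 : u ≤ a (i+1) := hu.2
        have e1 : a i = (i:ℝ)/T := rfl
        have e2 : a (i+1) = ((i:ℝ)+1)/T := by show ((i+1:ℕ):ℝ)/T = _; push_cast; ring
        rw [e1] at h1; rw [e2] at h2
        rw [abs_le]
        constructor
        · linarith
        · have : (i:ℝ)/T = ((i:ℝ)+1)/T - 1/T := by field_simp; ring
          rw [this] at h1
          linarith
      calc ‖f (((i:ℝ)+1)/T) - f u‖ = |f (((i:ℝ)+1)/T) - f u| := rfl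
        _ ≤ L * |(((i:ℝ)+1)/T) - u| := hlip u hu' _ hc1
        _ ≤ L * (1/T) := by gcongr
        _ = L / T := by ring
    rw [hlen, abs_of_nonneg (by positivity : (0:ℝ) ≤ 1/T)] at hbd
    calc (T:ℝ) * |∫ u in (a i)..(a (i+1)), (f (((i:ℝ)+1)/T) - f u)|
        ≤ T * ((L/T) * (1/T)) := by gcongr
      _ = L / T := by field_simp
  calc |(∑ i ∈ Finset.range T, f (((i:ℝ)+1)/T)) - T * ∫ u in (0:ℝ)..1, f u|
      = |∑ i ∈ Finset.range T, (f (((i:ℝ)+1)/T) - T * ∫ u in (a i)..(a (i+1)), f u)| := by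
        rw [Finset.sum_sub_distrib, ← Finset.mul_sum, hsplit]
    _ ≤ ∑ i ∈ Finset.range T, |f (((i:ℝ)+1)/T) - T * ∫ u in (a i)..(a (i+1)), f u| :=
        Finset.abs_sum_le_sum_abs _ _
    _ ≤ ∑ i ∈ Finset.range T, L / T := Finset.sum_le_sum (fun i hi => key i (Finset.mem_range.mp hi))
    _ = L := by
        rw [Finset.sum_const, Finset.card_range, nsmul_eq_mul]
        field_simp

lemma opNorm_le_card_mul_max {r : ℕ} (A : Matrix (Fin r) (Fin r) ℝ) {M : ℝ} (hM : 0 ≤ M)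
    (hA : ∀ k l, |A k l| ≤ M) : opNorm A ≤ r * M := by
  apply ContinuousLinearMap.opNorm_le_bound _ (by positivity)
  intro x
  simp only [LinearMap.coe_toContinuousLinearMap']
  have hx2 : ∑ l, x l ^ 2 = ‖x‖ ^ 2 := by
    rw [EuclideanSpace.norm_eq, Real.sq_sqrt (by positivity)]
    exact Finset.sum_congr rfl fun l _ => by rw [Real.norm_eq_abs, sq_abs]
  have habs : (∑ l, |x l|) ^ 2 ≤ r * ‖x‖ ^ 2 := by
    have := sq_sum_le_card_mul_sum_sq (s := Finset.univ) (f := fun l : Fin r => |x l|)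
    simp only [Finset.card_univ, Fintype.card_fin, sq_abs] at this
    rw [← hx2]
    exact_mod_cast this
  have hcomp : ∀ k, |(Matrix.toEuclideanLin A x) k| ≤ M * ∑ l, |x l| := by
    intro k
    have : (Matrix.toEuclideanLin A x) k = ∑ l, A k l * x l := rfl
    rw [this]
    calc |∑ l, A k l * x l| ≤ ∑ l, |A k l * x l| := Finset.abs_sum_le_sum_abs _ _
      _ ≤ ∑ l, M * |x l| := by
          apply Finset.sum_le_sum
          intro l _
          rw [abs_mul]
          exact mul_le_mul_of_nonneg_right (hA k l) (abs_nonneg _)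
      _ = M * ∑ l, |x l| := by rw [Finset.mul_sum]
  rw [EuclideanSpace.norm_eq]
  have hnn : (0:ℝ) ≤ r * M * ‖x‖ := by positivity
  rw [show (r:ℝ) * M * ‖x‖ = Real.sqrt ((r * M * ‖x‖)^2) from (Real.sqrt_sq hnn).symm]
  apply Real.sqrt_le_sqrt
  calc ∑ k, ‖(Matrix.toEuclideanLin A x) k‖ ^ 2
      ≤ ∑ k : Fin r, (M * ∑ l, |x l|) ^ 2 := by
        apply Finset.sum_le_sum
        intro k _
        rw [Real.norm_eq_abs]
        exact pow_le_pow_left₀ (abs_nonneg _) (hcomp k) 2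
    _ = r * (M ^ 2 * (∑ l, |x l|) ^ 2) := by
        rw [Finset.sum_const, Finset.card_univ, Fintype.card_fin, nsmul_eq_mul, mul_pow]
    _ ≤ r * (M ^ 2 * (r * ‖x‖ ^ 2)) := by
        apply mul_le_mul_of_nonneg_left _ (by positivity)
        exact mul_le_mul_of_nonneg_left habs (by positivity)
    _ = (r * M * ‖x‖) ^ 2 := by ring

lemma opNorm_dim_zero_le (A : Matrix (Fin 0) (Fin 0) ℝ) : opNorm A ≤ 0 := by
  apply ContinuousLinearMap.opNorm_le_bound _ le_rfl
  intro x
  have h : ‖(LinearMap.toContinuousLinearMap (Matrix.toEuclideanLin A)) x‖ = 0 := by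
    rw [LinearMap.coe_toContinuousLinearMap', EuclideanSpace.norm_eq]
    simp
  rw [h]
  simp

lemma filter_univ_card_eq {T : ℕ} (P : ℕ → Prop) [DecidablePred P] :
    (Finset.univ.filter fun t : Fin T => P t.val).card = ((Finset.range T).filter P).card := by
  rw [Finset.card_filter, Finset.card_filter]
  exact Fin.sum_univ_eq_sum_range (fun i => if P i then 1 else 0) T

lemma band_count_le (T B : ℕ) (s : ℕ) :
    ((Finset.range T).filter fun t : ℕ =>
        1 ≤ |(t:ℤ) - (s:ℤ)| ∧ |(t:ℤ) - (s:ℤ)| ≤ (B:ℤ)).card ≤ 2 * B := by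
  have hsub : ((Finset.range T).filter fun t : ℕ =>
      1 ≤ |(t:ℤ) - (s:ℤ)| ∧ |(t:ℤ) - (s:ℤ)| ≤ (B:ℤ)) ⊆
      (Finset.Icc (s - B) (s + B)).erase s := by
    intro t ht
    simp only [Finset.mem_filter, Finset.mem_range, Finset.mem_erase, Finset.mem_Icc,
      abs_le, le_abs] at ht ⊢
    omega
  calc _ ≤ ((Finset.Icc (s - B) (s + B)).erase s).card := Finset.card_le_card hsub
    _ ≤ (Finset.Icc (s - B) (s + B)).card - 1 := by
        rw [Finset.card_erase_of_mem (by simp only [Finset.mem_Icc]; omega)]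
    _ ≤ 2 * B := by rw [Nat.card_Icc]; omega

lemma band_count_eq (T B : ℕ) (s : ℕ) (h1 : B ≤ s) (h2 : s + B + 1 ≤ T) :
    ((Finset.range T).filter fun t : ℕ =>
        1 ≤ |(t:ℤ) - (s:ℤ)| ∧ |(t:ℤ) - (s:ℤ)| ≤ (B:ℤ)).card = 2 * B := by
  have hset : ((Finset.range T).filter fun t : ℕ =>
      1 ≤ |(t:ℤ) - (s:ℤ)| ∧ |(t:ℤ) - (s:ℤ)| ≤ (B:ℤ)) =
      (Finset.Icc (s - B) (s + B)).erase s := by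
    ext t
    simp only [Finset.mem_filter, Finset.mem_range, Finset.mem_erase, Finset.mem_Icc,
      abs_le, le_abs]
    omega
  rw [hset, Finset.card_erase_of_mem (by simp only [Finset.mem_Icc]; omega), Nat.card_Icc]
  omega

lemma boundary_count_le (T B : ℕ) (hBT : B ≤ T) :
    ((Finset.range T).filter fun s : ℕ => ¬(B ≤ s ∧ s + B + 1 ≤ T)).card ≤ 2 * B := by
  have hsub : ((Finset.range T).filter fun s : ℕ => ¬(B ≤ s ∧ s + B + 1 ≤ T)) ⊆
      Finset.range B ∪ Finset.Ico (T - B) T := by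
    intro t ht
    simp only [Finset.mem_filter, Finset.mem_range, Finset.mem_union, Finset.mem_Ico] at ht ⊢
    omega
  calc _ ≤ (Finset.range B ∪ Finset.Ico (T - B) T).card := Finset.card_le_card hsub
    _ ≤ (Finset.range B).card + (Finset.Ico (T - B) T).card := Finset.card_union_le _ _
    _ ≤ 2 * B := by rw [Finset.card_range, Nat.card_Ico]; omega

lemma entry_bound (r T B : ℕ) (Cg : ℝ) (g : Fin r → ℝ → ℝ) (hB : 1 ≤ B) (hBT : B ≤ T)
    (hCg : 0 ≤ Cg)
    (hlipg : ∀ k : Fin r, ∀ x ∈ Set.Icc (0:ℝ) 1, ∀ y ∈ Set.Icc (0:ℝ) 1,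
      |g k y - g k x| ≤ Cg * |y - x|)
    (hcont : ∀ k, ContinuousOn (g k) (Set.Icc 0 1))
    (horth : ∀ k l, (∫ u in (0 : ℝ)..1, g k u * g l u) = if k = l then (1 : ℝ) else 0)
    (hbound : ∀ k : Fin r, ∀ u ∈ Set.Icc (0:ℝ) 1, |g k u| ≤ Cg)
    (k l : Fin r) :
    |((gridMat r T g)ᵀ * bandQ T B * gridMat r T g -
        (2 * (B : ℝ) * (T : ℝ)) • (1 : Matrix (Fin r) (Fin r) ℝ)) k l|
      ≤ 10 * Cg ^ 2 * (B:ℝ) ^ 2 := by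
  have hT1 : 1 ≤ T := le_trans hB hBT
  have hT0 : (0:ℝ) < T := by exact_mod_cast hT1
  have hB0 : (0:ℝ) < B := by exact_mod_cast hB
  have hBTr : (B:ℝ) ≤ T := by exact_mod_cast hBT
  set φ : Fin T → ℝ := fun t => ((t.val:ℝ)+1)/T with hφ
  have hφm : ∀ t : Fin T, φ t ∈ Set.Icc (0:ℝ) 1 := by
    intro t
    constructor
    · positivity
    · rw [div_le_one hT0]
      exact_mod_cast Nat.succ_le_of_lt t.isLt
  set a : Fin T → ℝ := fun t => g k (φ t) with haa
  set b : Fin T → ℝ := fun t => g l (φ t) with hbb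
  set q : Fin T → Fin T → ℝ := fun t s =>
    if 1 ≤ |(t.val:ℤ) - (s.val:ℤ)| ∧ |(t.val:ℤ) - (s.val:ℤ)| ≤ (B:ℤ) then (1:ℝ) else 0 with hq
  have ha_le : ∀ t, |a t| ≤ Cg := fun t => hbound k _ (hφm t)
  have hb_le : ∀ t, |b t| ≤ Cg := fun t => hbound l _ (hφm t)
  -- matrix entry as a double sum
  have hE : ((gridMat r T g)ᵀ * bandQ T B * gridMat r T g) k l
      = ∑ s : Fin T, ∑ t : Fin T, q t s * (a t * b s) := by
    rw [Matrix.mul_apply]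
    refine Finset.sum_congr rfl fun s _ => ?_
    rw [Matrix.mul_apply, Finset.sum_mul]
    refine Finset.sum_congr rfl fun t _ => ?_
    simp only [Matrix.transpose_apply, gridMat, bandQ, Matrix.of_apply, hq, haa, hbb, hφ]
    ring
  have hI : ((2 * (B : ℝ) * (T : ℝ)) • (1 : Matrix (Fin r) (Fin r) ℝ)) k l
      = 2 * (B:ℝ) * T * (if k = l then (1:ℝ) else 0) := by
    simp [Matrix.smul_apply, Matrix.one_apply]
  -- N s = row count
  set N : Fin T → ℝ := fun s => ∑ t : Fin T, q t s with hN
  have hNcard : ∀ s : Fin T, N s = (((Finset.range T).filter fun t : ℕ =>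
      1 ≤ |(t:ℤ) - (s.val:ℤ)| ∧ |(t:ℤ) - (s.val:ℤ)| ≤ (B:ℤ)).card : ℝ) := by
    intro s
    rw [hN]
    simp only [hq]
    rw [Finset.sum_boole]
    congr 1
    exact filter_univ_card_eq
      (fun t => 1 ≤ |(t:ℤ) - (s.val:ℤ)| ∧ |(t:ℤ) - (s.val:ℤ)| ≤ (B:ℤ))
  have hNle : ∀ s, N s ≤ 2 * B := by
    intro s
    rw [hNcard s]
    exact_mod_cast band_count_le T B s.val
  have hN0 : ∀ s, 0 ≤ N s := by
    intro s
    rw [hNcard s]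
    positivity
  have hNeq : ∀ s : Fin T, B ≤ s.val → s.val + B + 1 ≤ T → N s = 2 * B := by
    intro s h1 h2
    rw [hNcard s]
    exact_mod_cast band_count_eq T B s.val h1 h2
  set S : ℝ := ∑ s : Fin T, a s * b s with hS
  set D2 : ℝ := ∑ s : Fin T, N s * (a s * b s) with hD2
  -- step 1
  have h1 : |(∑ s : Fin T, ∑ t : Fin T, q t s * (a t * b s)) - D2| ≤ 2 * Cg^2 * B^2 := by
    have hterm : ∀ s t : Fin T,
        |q t s * (a t * b s) - q t s * (a s * b s)| ≤ q t s * (Cg * (B/T) * Cg) := by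
      intro s t
      simp only [hq]
      split_ifs with h
      · have hab : |a t - a s| ≤ Cg * (B/T) := by
          have hlip := hlipg k (φ s) (hφm s) (φ t) (hφm t)
          have hd : |φ t - φ s| ≤ B/T := by
            have e : φ t - φ s = ((t.val:ℝ) - s.val)/T := by rw [hφ]; field_simp; ring
            rw [e, abs_div, abs_of_pos hT0]
            gcongr
            exact_mod_cast h.2
          calc |a t - a s| ≤ Cg * |φ t - φ s| := hlip
            _ ≤ Cg * (B/T) := by gcongr
        calc |1 * (a t * b s) - 1 * (a s * b s)| = |a t - a s| * |b s| := by
              rw [← abs_mul]; ring_nf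
          _ ≤ (Cg * (B/T)) * Cg :=
              mul_le_mul hab (hb_le s) (abs_nonneg _) (by positivity)
          _ = 1 * (Cg * (B/T) * Cg) := by ring
      · simp
    have hD2' : D2 = ∑ s : Fin T, ∑ t : Fin T, q t s * (a s * b s) := by
      rw [hD2]
      exact Finset.sum_congr rfl fun s _ => by rw [hN, Finset.sum_mul]
    rw [hD2', ← Finset.sum_sub_distrib]
    calc |∑ s : Fin T, ((∑ t : Fin T, q t s * (a t * b s)) - ∑ t : Fin T, q t s * (a s * b s))|
        ≤ ∑ s : Fin T, |(∑ t : Fin T, q t s * (a t * b s)) - ∑ t : Fin T, q t s * (a s * b s)| :=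
          Finset.abs_sum_le_sum_abs _ _
      _ ≤ ∑ s : Fin T, ∑ t : Fin T, |q t s * (a t * b s) - q t s * (a s * b s)| := by
          apply Finset.sum_le_sum
          intro s _
          rw [← Finset.sum_sub_distrib]
          exact Finset.abs_sum_le_sum_abs _ _
      _ ≤ ∑ s : Fin T, ∑ t : Fin T, q t s * (Cg * (B/T) * Cg) :=
          Finset.sum_le_sum fun s _ => Finset.sum_le_sum fun t _ => hterm s t
      _ = ∑ s : Fin T, N s * (Cg * (B/T) * Cg) := by
          refine Finset.sum_congr rfl fun s _ => ?_
          rw [hN, Finset.sum_mul]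
      _ ≤ ∑ s : Fin T, (2*B) * (Cg * (B/T) * Cg) := by
          apply Finset.sum_le_sum
          intro s _
          exact mul_le_mul_of_nonneg_right (hNle s) (by positivity)
      _ = T * ((2*B) * (Cg * (B/T) * Cg)) := by
          rw [Finset.sum_const, Finset.card_univ, Fintype.card_fin, nsmul_eq_mul]
      _ = 2 * Cg^2 * B^2 := by field_simp
  -- step 2
  have h2 : |D2 - 2 * B * S| ≤ 4 * Cg^2 * B^2 := by
    have hterm : ∀ s : Fin T, |(N s - 2*B) * (a s * b s)|
        ≤ if B ≤ s.val ∧ s.val + B + 1 ≤ T then 0 else (2*B) * Cg^2 := by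
      intro s
      split_ifs with h
      · rw [hNeq s h.1 h.2]
        simp
      · rw [abs_mul]
        apply mul_le_mul
        · rw [abs_le]
          constructor
          · have := hNle s; linarith [hN0 s]
          · have := hN0 s; linarith [hNle s]
        · rw [abs_mul, sq]
          exact mul_le_mul (ha_le s) (hb_le s) (abs_nonneg _) hCg
        · exact abs_nonneg _
        · positivity
    calc |D2 - 2*B*S|
        = |∑ s : Fin T, (N s - 2*B) * (a s * b s)| := by
          rw [hD2, hS, Finset.mul_sum, ← Finset.sum_sub_distrib]
          congr 1
          exact Finset.sum_congr rfl fun s _ => by ring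
      _ ≤ ∑ s : Fin T, |(N s - 2*B) * (a s * b s)| := Finset.abs_sum_le_sum_abs _ _
      _ ≤ ∑ s : Fin T, (if B ≤ s.val ∧ s.val + B + 1 ≤ T then 0 else (2*B) * Cg^2) :=
          Finset.sum_le_sum fun s _ => hterm s
      _ ≤ 4 * Cg^2 * B^2 := by
          rw [Finset.sum_ite, Finset.sum_const, Finset.sum_const, smul_zero, zero_add,
            nsmul_eq_mul]
          have hcard : (Finset.univ.filter fun s : Fin T =>
              ¬(B ≤ s.val ∧ s.val + B + 1 ≤ T)).card ≤ 2 * B := by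
            rw [filter_univ_card_eq (fun s => ¬(B ≤ s ∧ s + B + 1 ≤ T))]
            exact boundary_count_le T B hBT
          calc ((Finset.univ.filter fun s : Fin T =>
                ¬(B ≤ s.val ∧ s.val + B + 1 ≤ T)).card : ℝ) * ((2*B) * Cg^2)
              ≤ (2*B) * ((2*B) * Cg^2) := by
                apply mul_le_mul_of_nonneg_right _ (by positivity)
                exact_mod_cast hcard
            _ = 4 * Cg^2 * B^2 := by ring
  -- step 3
  have h3 : |2*B*S - 2 * (B:ℝ) * T * (if k = l then (1:ℝ) else 0)| ≤ 4 * Cg^2 * B^2 := by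
    set f : ℝ → ℝ := fun u => g k u * g l u with hf
    have hfc : ContinuousOn f (Set.Icc 0 1) := (hcont k).mul (hcont l)
    have hflip : ∀ x ∈ Set.Icc (0:ℝ) 1, ∀ y ∈ Set.Icc (0:ℝ) 1,
        |f y - f x| ≤ (2*Cg^2) * |y - x| := by
      intro x hx y hy
      have hd : f y - f x = g k y * (g l y - g l x) + g l x * (g k y - g k x) := by
        rw [hf]; ring
      calc |f y - f x| ≤ |g k y| * |g l y - g l x| + |g l x| * |g k y - g k x| := by
            rw [hd]
            refine le_trans (abs_add_le _ _) ?_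
            rw [abs_mul, abs_mul]
        _ ≤ Cg * (Cg * |y - x|) + Cg * (Cg * |y - x|) := by
            apply add_le_add
            · exact mul_le_mul (hbound k y hy) (hlipg l x hx y hy) (abs_nonneg _) hCg
            · exact mul_le_mul (hbound l x hx) (hlipg k x hx y hy) (abs_nonneg _) hCg
        _ = (2*Cg^2) * |y - x| := by ring
    have hSf : S = ∑ i ∈ Finset.range T, f (((i:ℝ)+1)/T) := by
      rw [hS]
      exact Fin.sum_univ_eq_sum_range (fun i => f (((i:ℝ)+1)/T)) T
    have hint : (∫ u in (0:ℝ)..1, f u) = if k = l then (1:ℝ) else 0 := horth k l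
    have hR := riemann_bound T hT1 hfc hflip
    rw [hint] at hR
    rw [← hSf] at hR
    have : 2*B*S - 2 * (B:ℝ) * T * (if k = l then (1:ℝ) else 0)
        = 2*B * (S - T * (if k = l then (1:ℝ) else 0)) := by ring
    rw [this, abs_mul, abs_of_pos (by positivity : (0:ℝ) < 2*B)]
    calc 2*(B:ℝ) * |S - T * (if k = l then (1:ℝ) else 0)| ≤ 2*B * (2*Cg^2) := by gcongr
      _ ≤ 4 * Cg^2 * B^2 := by
          have hB1 : (1:ℝ) ≤ B := by exact_mod_cast hB
          nlinarith [mul_nonneg (sq_nonneg Cg) (mul_nonneg hB0.le (sub_nonneg.mpr hB1))]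
  rw [Matrix.sub_apply, hE, hI]
  calc |(∑ s : Fin T, ∑ t : Fin T, q t s * (a t * b s))
        - 2 * (B:ℝ) * T * (if k = l then (1:ℝ) else 0)|
      ≤ |(∑ s : Fin T, ∑ t : Fin T, q t s * (a t * b s)) - D2| + |D2 - 2*B*S|
        + |2*B*S - 2 * (B:ℝ) * T * (if k = l then (1:ℝ) else 0)| := by
        apply le_trans (abs_sub_le _ (2*B*S) _)
        gcongr
        exact abs_sub_le _ D2 _
    _ ≤ 2 * Cg^2 * B^2 + 4 * Cg^2 * B^2 + 4 * Cg^2 * B^2 := by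
        gcongr
    _ = 10 * Cg^2 * B^2 := by ring

/-- with `g_1,…,g_r` orthonormal in `L²[0,1]`, `C¹`, bounded together with
their derivatives by `C_g`, `F_{t,k} = g_k(t/T)` and `Q` the 0/1 band matrix of bandwidth
`1 ≤ B ≤ T`, there is an absolute constant `C > 0` with
`‖Fᵀ Q F − 2BT I_r‖_op ≤ C C_g² B² r`. -/
theorem gridMat_band_gram_approx :
    ∃ C : ℝ, 0 < C ∧
      ∀ (r T B : ℕ) (Cg : ℝ) (g : Fin r → ℝ → ℝ),
        1 ≤ B → B ≤ T →
        (∀ k, ContDiffOn ℝ 1 (g k) (Set.Icc (0 : ℝ) 1)) →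
        (∀ k l, (∫ u in (0 : ℝ)..1, g k u * g l u) = if k = l then (1 : ℝ) else 0) →
        (∀ k, ∀ u ∈ Set.Icc (0 : ℝ) 1, |g k u| ≤ Cg ∧ |deriv (g k) u| ≤ Cg) →
        opNorm ((gridMat r T g)ᵀ * bandQ T B * gridMat r T g -
            (2 * (B : ℝ) * (T : ℝ)) • (1 : Matrix (Fin r) (Fin r) ℝ)) ≤
          C * Cg ^ 2 * (B : ℝ) ^ 2 * r := by
  refine ⟨10, by norm_num, ?_⟩
  intro r T B Cg g hB hBT hsmooth horth hbound
  rcases Nat.eq_zero_or_pos r with hr | hr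
  · subst hr
    calc opNorm _ ≤ 0 := opNorm_dim_zero_le _
      _ ≤ 10 * Cg ^ 2 * (B : ℝ) ^ 2 * ((0:ℕ):ℝ) := by simp
  · have hCg : 0 ≤ Cg :=
      le_trans (abs_nonneg _) (hbound ⟨0, hr⟩ 0 (by norm_num)).1
    have hlipg : ∀ k : Fin r, ∀ x ∈ Set.Icc (0:ℝ) 1, ∀ y ∈ Set.Icc (0:ℝ) 1,
        |g k y - g k x| ≤ Cg * |y - x| :=
      fun k => lip_of_deriv (hsmooth k) (fun u hu => (hbound k u hu).2)
    have hcont : ∀ k, ContinuousOn (g k) (Set.Icc 0 1) :=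
      fun k => (hsmooth k).continuousOn
    have hb' : ∀ k : Fin r, ∀ u ∈ Set.Icc (0:ℝ) 1, |g k u| ≤ Cg :=
      fun k u hu => (hbound k u hu).1
    have hent := entry_bound r T B Cg g hB hBT hCg hlipg hcont horth hb'
    have := opNorm_le_card_mul_max
      ((gridMat r T g)ᵀ * bandQ T B * gridMat r T g -
        (2 * (B : ℝ) * (T : ℝ)) • (1 : Matrix (Fin r) (Fin r) ℝ))
      (M := 10 * Cg ^ 2 * (B:ℝ) ^ 2) (by positivity) hent
    calc opNorm _ ≤ (r:ℝ) * (10 * Cg ^ 2 * (B:ℝ) ^ 2) := this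
      _ = 10 * Cg ^ 2 * (B : ℝ) ^ 2 * r := by ring
end
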